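/- Let m be a positive natural number and order ℕ^m componentwise. Then the set U(ℕ^m, ≤) of upward closed subsets of ℕ^m, partially ordered by set inclusion ⊆, has no antichain; that is, there is no sequence (F_i)_{i∈ℕ} of upward closed subsets of ℕ^m such that F_i ⊆ F_j implies i = j. -/

import Mathlib

open Set

section aux

/-- Index lemma for Higman embeddings: each element of `A` is related to an element
of `B` at an index at least as large. -/
lemma sublistForall₂_exists_ge_index {β : Type*} {r : β → β → Prop} :
    ∀ {A B : List β}, List.SublistForall₂ r A B →
      ∀ n (hn : n < A.length), ∃ m, n ≤ m ∧ ∃ hm : m < B.length,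
        r (A.get ⟨n, hn⟩) (B.get ⟨m, hm⟩) := by
  intro A B h
  induction h with
  | nil => intro n hn; simp at hn
  | @cons a b l₁ l₂ hab _ ih =>
    intro n hn
    match n with
    | 0 => exact ⟨0, le_refl 0, by simp, hab⟩
    | Nat.succ k =>
      obtain ⟨m, hm1, hm2, hm3⟩ := ih k (by simpa using hn)
      exact ⟨m + 1, by omega, by simpa using hm2, hm3⟩
  | @cons_right a l₁ l₂ _ ih =>
    intro n hn
    obtain ⟨m, hm1, hm2, hm3⟩ := ih n hn
    exact ⟨m + 1, by omega, by simpa using hm2, hm3⟩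

/-- Base case: lower sets of a subsingleton type are PWO under inclusion. -/
lemma lowerSets_pwo_of_subsingleton {β : Type*} [Preorder β] [Subsingleton β] :
    {D : Set β | IsLowerSet D}.PartiallyWellOrderedOn (· ⊆ ·) := by
  rw [Set.partiallyWellOrderedOn_iff_exists_lt]
  intro f _
  by_cases h : f 0 ⊆ f 1
  · exact ⟨0, 1, by norm_num, h⟩
  · refine ⟨1, 2, by norm_num, ?_⟩
    obtain ⟨y, _, hy1⟩ := not_subset.mp h
    intro x hx
    exact absurd (by rwa [Subsingleton.elim x y] at hx) hy1

/-- Inductive step: if lower sets of `α` are PWO under inclusion, then so are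
lower sets of `α × ℕ`. -/
lemma lowerSets_pwo_step {α : Type*} [Preorder α]
    (hI : {D : Set α | IsLowerSet D}.PartiallyWellOrderedOn (· ⊆ ·)) :
    {D : Set (α × ℕ) | IsLowerSet D}.PartiallyWellOrderedOn (· ⊆ ·) := by
  rw [Set.partiallyWellOrderedOn_iff_exists_lt]
  intro f hf
  -- slices
  set s : ℕ → ℕ → Set α := fun k n => {x | (x, n) ∈ f k} with hs
  have hls : ∀ k n, s k n ∈ {D : Set α | IsLowerSet D} := by
    intro k n x y hyx hx
    exact hf k (show ((y, n) : α × ℕ) ≤ (x, n) from ⟨hyx, le_refl n⟩) hx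
  have hanti : ∀ k {n n' : ℕ}, n ≤ n' → s k n' ⊆ s k n := by
    intro k n n' h x hx
    exact hf k (show ((x, n) : α × ℕ) ≤ (x, n') from ⟨le_refl x, h⟩) hx
  -- stabilization
  have hstab : ∀ k, ∃ N, ∀ n, N ≤ n → s k n = s k N := by
    intro k
    by_contra hcon
    push_neg at hcon
    have hstep : ∀ N, ∃ n, N < n ∧ s k n ≠ s k N := by
      intro N
      obtain ⟨n, hn1, hn2⟩ := hcon N
      refine ⟨n, lt_of_le_of_ne hn1 ?_, hn2⟩
      rintro rfl; exact hn2 rfl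
    choose t ht1 ht2 using hstep
    set u : ℕ → ℕ := fun i => t^[i] 0 with hu
    have husucc : ∀ i, u (i + 1) = t (u i) := by
      intro i; simp [hu, Function.iterate_succ_apply']
    have humono : StrictMono u := by
      apply strictMono_nat_of_lt_succ
      intro i; rw [husucc]; exact ht1 (u i)
    obtain ⟨i, j, hij, hsub⟩ := hI.exists_lt (f := fun i => s k (u i)) (fun i => hls k (u i))
    have h1 : s k (u j) ⊆ s k (u (i + 1)) := hanti k (humono.le_iff_le.mpr hij)
    have h2 : s k (u (i + 1)) ⊆ s k (u i) := by
      rw [husucc]; exact hanti k (ht1 (u i)).le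
    have : s k (u (i + 1)) = s k (u i) :=
      le_antisymm h2 (subset_trans hsub h1)
    rw [husucc] at this
    exact ht2 (u i) this
  choose N hN using hstab
  set L : ℕ → Set α := fun k => s k (N k) with hL
  set l : ℕ → List (Set α) := fun k => (List.range (N k)).map (s k) with hl
  -- monotone subsequence on limits
  obtain ⟨g, hg⟩ := hI.exists_monotone_subseq (f := L) (fun k => hls k (N k))
  -- Higman on the initial parts
  obtain ⟨i, j, hij, hsl⟩ :=
    (hI.partiallyWellOrderedOn_sublistForall₂ (· ⊆ ·)).exists_lt (f := fun k => l (g k))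
      (by
        intro k x hx
        simp only [hl, List.mem_map, List.mem_range] at hx
        obtain ⟨n, _, rfl⟩ := hx
        exact hls (g k) n)
  refine ⟨g i, g j, g.strictMono hij, ?_⟩
  -- it suffices to compare all slices
  have hlen : ∀ k, (l k).length = N k := by intro k; simp [hl]
  have hget : ∀ k n (hn : n < (l k).length), (l k).get ⟨n, hn⟩ = s k n := by
    intro k n hn; simp [hl]
  have key : ∀ n, s (g i) n ⊆ s (g j) n := by
    intro n
    by_cases hn : n < N (g i)
    · -- use the Higman embedding
      obtain ⟨m, hm1, hm2, hm3⟩ :=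
        sublistForall₂_exists_ge_index hsl n (by rwa [hlen])
      rw [hget] at hm3
      have := hget (g j) m hm2
      rw [this] at hm3
      exact subset_trans hm3 (hanti (g j) hm1)
    · -- beyond stabilization: use the limits
      push_neg at hn
      have h1 : s (g i) n = L (g i) := hN (g i) n hn
      have h2 : L (g j) ⊆ s (g j) n := by
        by_cases hn' : N (g j) ≤ n
        · rw [hN (g j) n hn']
        · exact hanti (g j) (le_of_not_ge hn')
      rw [h1]
      exact subset_trans (hg i j hij.le) h2
  rintro ⟨x, n⟩ hx
  exact key n hx

/-- Lower sets of `ℕ^m` are PWO under inclusion. -/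
lemma lowerSets_pwo : ∀ m : ℕ,
    {D : Set (Fin m → ℕ) | IsLowerSet D}.PartiallyWellOrderedOn (· ⊆ ·) := by
  intro m
  induction m with
  | zero =>
    haveI : Subsingleton (Fin 0 → ℕ) :=
      ⟨fun a b => funext fun i => i.elim0⟩
    exact lowerSets_pwo_of_subsingleton
  | succ m ih =>
    have hstep := lowerSets_pwo_step ih
    -- transfer along the equivalence (Fin (m+1) → ℕ) ≃ (Fin m → ℕ) × ℕ
    set e : (Fin (m + 1) → ℕ) → (Fin m → ℕ) × ℕ :=
      fun x => (x ∘ Fin.castSucc, x (Fin.last m)) with he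
    have hesnoc : ∀ p : (Fin m → ℕ) × ℕ, e (Fin.snoc p.1 p.2) = p := by
      intro p
      refine Prod.ext ?_ ?_
      · funext i; simp [he]
      · simp [he]
    have hord : ∀ x y : Fin (m + 1) → ℕ, e x ≤ e y ↔ x ≤ y := by
      intro x y
      constructor
      · rintro ⟨h1, h2⟩ i
        refine Fin.lastCases ?_ ?_ i
        · exact h2
        · intro k; exact h1 k
      · intro h
        exact ⟨fun k => h _, h _⟩
    have heinj : Function.Injective e := by
      intro x y hxy
      funext i
      refine Fin.lastCases ?_ ?_ i
      · exact congrArg Prod.snd hxy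
      · intro k; exact congrFun (congrArg Prod.fst hxy) k
    rw [Set.partiallyWellOrderedOn_iff_exists_lt]
    intro f hf
    obtain ⟨i, j, hij, hsub⟩ := hstep.exists_lt (f := fun k => e '' f k)
      (by
        intro k
        rintro a b hba ⟨u, hu, rfl⟩
        refine ⟨Fin.snoc b.1 b.2, ?_, hesnoc b⟩
        refine hf k ?_ hu
        rw [← hord]
        rw [hesnoc b]
        exact hba)
    refine ⟨i, j, hij, ?_⟩
    intro x hx
    obtain ⟨y, hy, hey⟩ := hsub ⟨x, hx, rfl⟩
    rwa [← heinj hey]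

end aux

/-- Theorem 1(2), second part: the upward closed subsets of `(ℕ^m, ≤)`, ordered by
inclusion, have no antichain. -/
theorem stmt_2 (m : ℕ) (hm : 0 < m) :
    ¬ ∃ F : ℕ → Set (Fin m → ℕ),
      (∀ i : ℕ, ∀ u ∈ F i, ∀ a : Fin m → ℕ, u ≤ a → a ∈ F i) ∧
      (∀ i j : ℕ, F i ⊆ F j → i = j) := by
  rintro ⟨F, hup, hanti⟩
  obtain ⟨i, j, hij, hsub⟩ := (lowerSets_pwo m).exists_lt (f := fun k => (F k)ᶜ)
    (by
      intro k a b hba ha hb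
      exact ha (hup k b hb a hba))
  have : F j ⊆ F i := by
    intro x hx
    by_contra hxi
    exact hsub hxi hx
  exact absurd (hanti j i this) (Nat.ne_of_gt hij)
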